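/- Let L be a finite lattice and let p, q be prime intervals with p prime-perspective to q and p ≠ q. Then the four elements 0_p, 1_p, 0_q, 1_q generate a sublattice isomorphic to either the four-element Boolean lattice (when p and q are perspective) or the five-element nonmodular lattice N_5. -/

import Mathlib

universe u

/-- A congruence of a lattice: an equivalence relation compatible with `⊔` and `⊓`. -/
structure LatCon (L : Type u) [Lattice L] : Type u where
  rel : L → L → Prop
  refl : ∀ a, rel a a
  symm : ∀ {a b}, rel a b → rel b a
  trans : ∀ {a b c}, rel a b → rel b c → rel a c
  sup_comp : ∀ {a b c d}, rel a b → rel c d → rel (a ⊔ c) (b ⊔ d)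
  inf_comp : ∀ {a b c d}, rel a b → rel c d → rel (a ⊓ c) (b ⊓ d)

variable {L : Type u} [Lattice L]

/-- The inclusion order on congruences. -/
def LatCon.le (α β : LatCon L) : Prop := ∀ a b : L, α.rel a b → β.rel a b

/-- The principal congruence `con(x, y)`: the smallest congruence collapsing `x` and `y`. -/
def conOf (x y : L) : LatCon L where
  rel a b := ∀ θ : LatCon L, θ.rel x y → θ.rel a b
  refl a := fun θ _ => θ.refl a
  symm h := fun θ hθ => θ.symm (h θ hθ)
  trans h₁ h₂ := fun θ hθ => θ.trans (h₁ θ hθ) (h₂ θ hθ)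
  sup_comp h₁ h₂ := fun θ hθ => θ.sup_comp (h₁ θ hθ) (h₂ θ hθ)
  inf_comp h₁ h₂ := fun θ hθ => θ.inf_comp (h₁ θ hθ) (h₂ θ hθ)

/-- The bottom congruence: equality. -/
def conBot : LatCon L where
  rel a b := a = b
  refl _ := rfl
  symm h := h.symm
  trans h₁ h₂ := h₁.trans h₂
  sup_comp h₁ h₂ := by rw [h₁, h₂]
  inf_comp h₁ h₂ := by rw [h₁, h₂]

/-- The join of two congruences: the smallest congruence containing both. -/
def conJoin (α β : LatCon L) : LatCon L where
  rel a b := ∀ θ : LatCon L, α.le θ → β.le θ → θ.rel a b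
  refl a := fun θ _ _ => θ.refl a
  symm h := fun θ hα hβ => θ.symm (h θ hα hβ)
  trans h₁ h₂ := fun θ hα hβ => θ.trans (h₁ θ hα hβ) (h₂ θ hα hβ)
  sup_comp h₁ h₂ := fun θ hα hβ => θ.sup_comp (h₁ θ hα hβ) (h₂ θ hα hβ)
  inf_comp h₁ h₂ := fun θ hα hβ => θ.inf_comp (h₁ θ hα hβ) (h₂ θ hα hβ)

/-- A congruence is join-irreducible if it is not the bottom congruence and is not
the join of two congruences unless it equals one of them. -/
def LatCon.JoinIrreducible (θ : LatCon L) : Prop :=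
  θ ≠ conBot ∧ ∀ α β : LatCon L, θ = conJoin α β → θ = α ∨ θ = β

/-- `p` is a prime interval: its bottom is covered by its top. -/
def IsPrimeInt (p : L × L) : Prop := p.1 ⋖ p.2

/-- `[a, b]` is perspective up to `[c, d]`: `b ⊔ c = d` and `a = b ⊓ c`. -/
def PerspUp (p q : L × L) : Prop := p.2 ⊔ q.1 = q.2 ∧ p.1 = p.2 ⊓ q.1

/-- `[a, b]` is perspective down to `[c, d]`: `a ⊓ d = c` and `a ⊔ d = b`. -/
def PerspDn (p q : L × L) : Prop := p.1 ⊓ q.2 = q.1 ∧ p.1 ⊔ q.2 = p.2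

/-- Perspectivity: up or down. -/
def Persp (p q : L × L) : Prop := PerspUp p q ∨ PerspDn p q

/-- `p` is prime-perspective down to `q`: `1_q ≤ 1_p`, `p` is perspective down onto the
interval `[0_p ⊓ 1_q, 1_q]` (i.e. `0_p ⊔ 1_q = 1_p`), and `q ⊆ [0_p ⊓ 1_q, 1_q]`
(i.e. `0_p ⊓ 1_q ≤ 0_q`). -/
def PPerspDn (p q : L × L) : Prop := q.2 ≤ p.2 ∧ p.1 ⊔ q.2 = p.2 ∧ p.1 ⊓ q.2 ≤ q.1

/-- `p` is prime-perspective up to `q`: the dual of `PPerspDn`. -/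
def PPerspUp (p q : L × L) : Prop := p.1 ≤ q.1 ∧ p.2 ⊓ q.1 = p.1 ∧ q.2 ≤ p.2 ⊔ q.1

/-- Prime-perspectivity: up or down. -/
def PPersp (p q : L × L) : Prop := PPerspUp p q ∨ PPerspDn p q

/-- Prime-projectivity: the reflexive-transitive extension of prime-perspectivity. -/
def PProj : (L × L) → (L × L) → Prop := Relation.ReflTransGen PPersp

/-- `q` is collapsed by `con(p)`. -/
def Collapses (p q : L × L) : Prop := (conOf p.1 p.2).rel q.1 q.2

/-- `{e, a, b, c, t}` forms a pentagon (`N₅`) sublattice: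
`e < a < t`, `e < b < c < t`, with `a` a complement of both `b` and `c`. -/
def IsN5 (e a b c t : L) : Prop :=
  e < a ∧ a < t ∧ e < b ∧ b < c ∧ c < t ∧
  a ⊓ b = e ∧ a ⊓ c = e ∧ a ⊔ b = t ∧ a ⊔ c = t

/-- `{e, a, b, t}` forms a sublattice isomorphic to the four-element Boolean lattice. -/
def IsBool4 (e a b t : L) : Prop :=
  a ⊓ b = e ∧ a ⊔ b = t ∧ ¬ a ≤ b ∧ ¬ b ≤ a

/-- `{e, a, b, t}` is a covering square `C₂²`. -/
def IsCovSquare (e a b t : L) : Prop :=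
  a ⊓ b = e ∧ a ⊔ b = t ∧ e ⋖ a ∧ e ⋖ b ∧ a ⋖ t ∧ b ⋖ t

/-- `{e, a, b, c, t}` forms a diamond (`M₃`) sublattice. -/
def IsM3 (e a b c t : L) : Prop :=
  a ⊓ b = e ∧ a ⊓ c = e ∧ b ⊓ c = e ∧ a ⊔ b = t ∧ a ⊔ c = t ∧ b ⊔ c = t ∧
  e < a ∧ e < b ∧ e < c ∧ a ≠ b ∧ a ≠ c ∧ b ≠ c

/-- A lattice is slim if it contains no `M₃` sublattice. -/
def Slim (L : Type u) [Lattice L] : Prop := ¬ ∃ e a b c t : L, IsM3 e a b c t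

/-- (Upper) semimodularity: `a ⊓ b ⋖ a` implies `b ⋖ a ⊔ b`. -/
def Semimodular (L : Type u) [Lattice L] : Prop := ∀ a b : L, a ⊓ b ⋖ a → b ⋖ a ⊔ b

/-- A planar diagram of a finite lattice: every element gets a position in the plane,
the vertical coordinate is strictly order-preserving, distinct elements get distinct
positions, and the straight-line edges of distinct covering pairs do not cross. -/
structure Diagram (L : Type u) [Lattice L] where
  x : L → ℚ
  y : L → ℚ
  y_strictMono : ∀ {a b : L}, a < b → y a < y b
  inj : Function.Injective fun v => (x v, y v)
  planar : ∀ a b c d : L, a ⋖ b → c ⋖ d →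
    (openSegment ℚ ((x a, y a) : ℚ × ℚ) (x b, y b) ∩
      openSegment ℚ ((x c, y c) : ℚ × ℚ) (x d, y d)).Nonempty → a = c ∧ b = d

/-- In the diagram `D`, the prime interval `p` swings to the prime interval `q`:
they share the same top, that top covers at least three elements, and `0_q` is
neither the left-most nor the right-most lower cover of the common top. -/
def Swing (D : Diagram L) (p q : L × L) : Prop :=
  p.2 = q.2 ∧ 3 ≤ Nat.card {z : L // z ⋖ p.2} ∧
  (¬ ∀ z : L, z ⋖ p.2 → D.x q.1 ≤ D.x z) ∧ (¬ ∀ z : L, z ⋖ p.2 → D.x z ≤ D.x q.1)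

/-- The conclusion of the Swing Lemma for prime intervals `p`, `q`: there are pairwise
distinct prime intervals `r = r₀, …, rₙ = q` with `p` perspective up to `r` and each
`rᵢ` perspective down to, or swinging to, `r_{i+1}`. -/
def SwingSeq (D : Diagram L) (p q : L × L) : Prop :=
  ∃ (n : ℕ) (r : Fin (n + 1) → L × L), Function.Injective r ∧
    (∀ i, IsPrimeInt (r i)) ∧ PerspUp p (r 0) ∧ r (Fin.last n) = q ∧
    ∀ i : Fin n, PerspDn (r i.castSucc) (r i.succ) ∨ Swing D (r i.castSucc) (r i.succ)

/-- The Swing Lemma holds for the lattice `L` with planar diagram `D`. -/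
def SwingLemmaHolds (L : Type u) [Lattice L] (D : Diagram L) : Prop :=
  ∀ p q : L × L, IsPrimeInt p → IsPrimeInt q → p ≠ q →
    (Collapses p q ↔ SwingSeq D p q)

/-- A corner of a finite lattice: a doubly irreducible element, distinct from the
extremes, whose unique upper cover covers exactly two elements and whose unique
lower cover is covered by exactly two elements. -/
def IsLatCorner (c : L) : Prop :=
  ¬ IsMin c ∧ ¬ IsMax c ∧ (∃! u : L, c ⋖ u) ∧ (∃! v : L, v ⋖ c) ∧
  (∀ u : L, c ⋖ u → Nat.card {z : L // z ⋖ u} = 2) ∧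
  (∀ v : L, v ⋖ c → Nat.card {z : L // v ⋖ z} = 2)


lemma isSublattice_bool4 {e a b t : L} (hea : e ≤ a) (heb : e ≤ b)
    (hat : a ≤ t) (hbt : b ≤ t) (h1 : a ⊓ b = e) (h2 : a ⊔ b = t) :
    IsSublattice ({e, a, b, t} : Set L) := by
  have het : e ≤ t := hea.trans hat
  have s1 : b ⊔ a = t := by rw [sup_comm]; exact h2
  have s2 : b ⊓ a = e := by rw [inf_comm]; exact h1
  constructor
  · intro x hx y hy
    simp only [Set.mem_insert_iff, Set.mem_singleton_iff] at hx hy ⊢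
    rcases hx with rfl|rfl|rfl|rfl <;> rcases hy with rfl|rfl|rfl|rfl <;>
      simp_all [sup_eq_right.2, sup_eq_left.2, sup_idem, h2, s1,
        sup_eq_right.2 hea, sup_eq_right.2 heb, sup_eq_right.2 het,
        sup_eq_left.2 hea, sup_eq_left.2 heb, sup_eq_left.2 het,
        sup_eq_right.2 hat, sup_eq_right.2 hbt, sup_eq_left.2 hat, sup_eq_left.2 hbt]
  · intro x hx y hy
    simp only [Set.mem_insert_iff, Set.mem_singleton_iff] at hx hy ⊢
    rcases hx with rfl|rfl|rfl|rfl <;> rcases hy with rfl|rfl|rfl|rfl <;>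
      simp_all [inf_idem, h1, s2,
        inf_eq_right.2 hea, inf_eq_right.2 heb, inf_eq_right.2 het,
        inf_eq_left.2 hea, inf_eq_left.2 heb, inf_eq_left.2 het,
        inf_eq_right.2 hat, inf_eq_right.2 hbt, inf_eq_left.2 hat, inf_eq_left.2 hbt]

set_option maxHeartbeats 1000000 in
lemma isSublattice_n5 {e a b c t : L} (hea : e ≤ a) (hat : a ≤ t)
    (heb : e ≤ b) (hbc : b ≤ c) (hct : c ≤ t)
    (h1 : a ⊓ b = e) (h2 : a ⊓ c = e) (h3 : a ⊔ b = t) (h4 : a ⊔ c = t) :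
    IsSublattice ({e, a, b, c, t} : Set L) := by
  have het : e ≤ t := hea.trans hat
  have hec : e ≤ c := heb.trans hbc
  have hbt : b ≤ t := hbc.trans hct
  have s3 : b ⊔ a = t := by rw [sup_comm]; exact h3
  have s4 : c ⊔ a = t := by rw [sup_comm]; exact h4
  have m1 : b ⊓ a = e := by rw [inf_comm]; exact h1
  have m2 : c ⊓ a = e := by rw [inf_comm]; exact h2
  constructor
  · intro x hx y hy
    simp only [Set.mem_insert_iff, Set.mem_singleton_iff] at hx hy ⊢
    rcases hx with rfl|rfl|rfl|rfl|rfl <;> rcases hy with rfl|rfl|rfl|rfl|rfl <;>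
      simp_all [sup_idem, h3, h4, s3, s4,
        sup_eq_right.2 hea, sup_eq_right.2 heb, sup_eq_right.2 het, sup_eq_right.2 hec,
        sup_eq_left.2 hea, sup_eq_left.2 heb, sup_eq_left.2 het, sup_eq_left.2 hec,
        sup_eq_right.2 hat, sup_eq_right.2 hbt, sup_eq_right.2 hct, sup_eq_right.2 hbc,
        sup_eq_left.2 hat, sup_eq_left.2 hbt, sup_eq_left.2 hct, sup_eq_left.2 hbc]
  · intro x hx y hy
    simp only [Set.mem_insert_iff, Set.mem_singleton_iff] at hx hy ⊢
    rcases hx with rfl|rfl|rfl|rfl|rfl <;> rcases hy with rfl|rfl|rfl|rfl|rfl <;>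
      simp_all [inf_idem, h1, h2, m1, m2,
        inf_eq_right.2 hea, inf_eq_right.2 heb, inf_eq_right.2 het, inf_eq_right.2 hec,
        inf_eq_left.2 hea, inf_eq_left.2 heb, inf_eq_left.2 het, inf_eq_left.2 hec,
        inf_eq_right.2 hat, inf_eq_right.2 hbt, inf_eq_right.2 hct, inf_eq_right.2 hbc,
        inf_eq_left.2 hat, inf_eq_left.2 hbt, inf_eq_left.2 hct, inf_eq_left.2 hbc]

theorem ppersp_generates_square_or_N5 [Fintype L] (p q : L × L)
    (hp : IsPrimeInt p) (hq : IsPrimeInt q) (hne : p ≠ q) (h : PPersp p q) :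
    (Persp p q ∧ ∃ e a b t : L, IsBool4 e a b t ∧
        latticeClosure ({p.1, p.2, q.1, q.2} : Set L) = {e, a, b, t}) ∨
    (∃ e a b c t : L, IsN5 e a b c t ∧
        latticeClosure ({p.1, p.2, q.1, q.2} : Set L) = {e, a, b, c, t}) := by
  obtain ⟨a, b⟩ := p
  obtain ⟨c, d⟩ := q
  have hab : a ⋖ b := hp
  have hcd : c ⋖ d := hq
  show (Persp (a, b) (c, d) ∧ ∃ e a' b' t : L, IsBool4 e a' b' t ∧
        latticeClosure ({a, b, c, d} : Set L) = {e, a', b', t}) ∨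
    (∃ e a' b' c' t : L, IsN5 e a' b' c' t ∧
        latticeClosure ({a, b, c, d} : Set L) = {e, a', b', c', t})
  rcases h with ⟨hac, hbca, hdbc⟩ | ⟨hdb, hadb, hadc⟩
  · -- prime-perspective UP : a ≤ c, b ⊓ c = a, d ≤ b ⊔ c
    replace hac : a ≤ c := hac
    replace hbca : b ⊓ c = a := hbca
    replace hdbc : d ≤ b ⊔ c := hdbc
    have habd : a ≤ b ⊓ d := le_inf hab.le (hac.trans hcd.le)
    rcases hab.eq_or_eq habd inf_le_left with h' | h'
    · -- b ⊓ d = a : pentagon case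
      have hsup : b ⊔ d = b ⊔ c :=
        le_antisymm (sup_le le_sup_left hdbc) (sup_le_sup_left hcd.le b)
      have hbltt : b < b ⊔ c := by
        rw [left_lt_sup]
        intro hcb
        have h1 : c = a := by rw [← hbca, inf_eq_right.2 hcb]
        have hd : d ≤ b := hdbc.trans (sup_le le_rfl hcb)
        have h2 : d = a := by rw [← h', inf_eq_right.2 hd]
        exact hcd.lt.ne (h1.trans h2.symm)
      have haltc : a < c := by
        refine hac.lt_of_ne fun hh => ?_
        have hd : d ≤ b := hdbc.trans (sup_le le_rfl (hh ▸ hab.le))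
        have h2 : d = a := by rw [← h', inf_eq_right.2 hd]
        exact hcd.lt.ne (hh.symm.trans h2.symm)
      have hdltt : d < b ⊔ c :=
        lt_of_le_of_ne hdbc fun hh =>
          hab.lt.ne (by rw [← h', inf_eq_left.2 (le_sup_left.trans hh.ge)])
      refine Or.inr ⟨a, b, c, d, b ⊔ c,
        ⟨hab.lt, hbltt, haltc, hcd.lt, hdltt, hbca, h', rfl, hsup⟩, ?_⟩
      apply Set.Subset.antisymm
      · refine latticeClosure_min ?_
          (isSublattice_n5 hab.le le_sup_left hac hcd.le hdbc hbca h' rfl hsup)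
        intro x hx
        simp only [Set.mem_insert_iff, Set.mem_singleton_iff] at hx ⊢
        tauto
      · intro x hx
        simp only [Set.mem_insert_iff, Set.mem_singleton_iff] at hx
        rcases hx with rfl | rfl | rfl | rfl | rfl
        · exact subset_latticeClosure (by simp)
        · exact subset_latticeClosure (by simp)
        · exact subset_latticeClosure (by simp)
        · exact subset_latticeClosure (by simp)
        · exact isSublattice_latticeClosure.supClosed
            (subset_latticeClosure (by simp)) (subset_latticeClosure (by simp))
    · -- b ⊓ d = b, i.e. b ≤ d : Boolean case, perspective up
      have hbd : b ≤ d := inf_eq_left.mp h'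
      have hbcd : b ⊔ c = d := le_antisymm (sup_le hbd hcd.le) hdbc
      have hnbc : ¬ b ≤ c := fun hh =>
        hab.lt.ne (by rw [← hbca, inf_eq_left.2 hh])
      have hncb : ¬ c ≤ b := by
        intro hh
        have h1 : c = a := by rw [← hbca, inf_eq_right.2 hh]
        have h2 : d = b := le_antisymm (hdbc.trans (sup_le le_rfl hh)) hbd
        exact hne (by rw [h1, h2])
      refine Or.inl ⟨Or.inl ⟨hbcd, hbca.symm⟩, a, b, c, d, ⟨hbca, hbcd, hnbc, hncb⟩, ?_⟩
      exact (isSublattice_bool4 hab.le hac hbd hcd.le hbca hbcd).latticeClosure_eq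
  · -- prime-perspective DOWN : d ≤ b, a ⊔ d = b, a ⊓ d ≤ c
    replace hdb : d ≤ b := hdb
    replace hadb : a ⊔ d = b := hadb
    replace hadc : a ⊓ d ≤ c := hadc
    have hdltb : d < b := by
      refine lt_of_le_of_ne hdb fun hh => ?_
      have hac : a ≤ c := by
        have : a ⊓ d = a := by rw [hh, inf_eq_left.2 hab.le]
        exact this ▸ hadc
      rcases hab.eq_or_eq hac (hh ▸ hcd.le) with h1 | h1
      · exact hne (by rw [h1, hh])
      · exact (hh ▸ hcd.lt).ne h1
    rcases hab.eq_or_eq le_sup_left (sup_le hab.le (hcd.le.trans hdb)) with h' | h'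
    · -- a ⊔ c = a, i.e. c ≤ a : Boolean case, perspective down
      have hca : c ≤ a := sup_eq_left.mp h'
      have hcad : a ⊓ d = c := le_antisymm hadc (le_inf hca hcd.le)
      have hnad : ¬ a ≤ d := fun hh =>
        hdltb.ne' (by rw [← hadb, sup_eq_right.2 hh])
      have hnda : ¬ d ≤ a := fun hh =>
        hcd.lt.ne (by rw [← hcad, inf_eq_right.2 hh])
      refine Or.inl ⟨Or.inr ⟨hcad, hadb⟩, c, a, d, b, ⟨hcad, hadb, hnad, hnda⟩, ?_⟩
      have hs : ({a, b, c, d} : Set L) = {c, a, d, b} := by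
        ext x
        simp only [Set.mem_insert_iff, Set.mem_singleton_iff]
        tauto
      rw [hs]
      exact (isSublattice_bool4 hca hcd.le hab.le hdb hcad hadb).latticeClosure_eq
    · -- a ⊔ c = b : pentagon case
      have hacb : a ⊔ c = b := h'
      have hnad : ¬ a ≤ d := by
        intro hh
        have : a ⊔ d = d := sup_eq_right.2 hh
        rw [hadb] at this
        exact hdltb.ne' this
      have helta : a ⊓ d < a := inf_lt_left.2 hnad
      have heltc : a ⊓ d < c :=
        lt_of_le_of_ne hadc fun hh =>
          hab.lt.ne (by rw [← hacb, ← hh, sup_eq_left.2 inf_le_left])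
      have hiac : a ⊓ c = a ⊓ d :=
        le_antisymm (le_inf inf_le_left (inf_le_right.trans hcd.le))
          (le_inf inf_le_left hadc)
      refine Or.inr ⟨a ⊓ d, a, c, d, b,
        ⟨helta, hab.lt, heltc, hcd.lt, hdltb, hiac, rfl, hacb, hadb⟩, ?_⟩
      apply Set.Subset.antisymm
      · refine latticeClosure_min ?_
          (isSublattice_n5 inf_le_left hab.le hadc hcd.le hdltb.le hiac rfl hacb hadb)
        intro x hx
        simp only [Set.mem_insert_iff, Set.mem_singleton_iff] at hx ⊢
        tauto
      · intro x hx
        simp only [Set.mem_insert_iff, Set.mem_singleton_iff] at hx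
        rcases hx with rfl | rfl | rfl | rfl | rfl
        · exact isSublattice_latticeClosure.infClosed
            (subset_latticeClosure (by simp)) (subset_latticeClosure (by simp))
        · exact subset_latticeClosure (by simp)
        · exact subset_latticeClosure (by simp)
        · exact subset_latticeClosure (by simp)
        · exact subset_latticeClosure (by simp)
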